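/- In the setting of a bounded sesquilinear form a₁ on V × W (inf-sup condition with constant c > 0, nondegenerate in the second component), a bounded sesquilinear form d on H × W, and the associated operators T : V → W* and C^V = C̃∘j ∈ L(V): the variational problem is strongly well-posed (i.e. for every φ ∈ W* there exists exactly one u ∈ V with a₁(u,w) + d(ju,w) = φ(w) for all w ∈ W) if and only if the operator I_V + C^V : V → V is bijective. In that case I_V + C^V has a bounded inverse, the unique solution is u = (I_V + C^V)⁻¹(T⁻¹φ), and u depends continuously on φ ∈ W*. -/

import Mathlib

/-- Proposition 3.5 b): the variational problem is strongly well-posed iff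
`I_V + C^V` is bijective; in that case `I_V + C^V` has a bounded inverse, the unique
solution is `u = (I_V + C^V)⁻¹ T⁻¹ φ`, and it depends continuously on `φ`. -/
theorem strongly_well_posed_iff_bijective
    {𝕂 V W H : Type*} [RCLike 𝕂]
    [NormedAddCommGroup V] [NormedSpace 𝕂 V] [CompleteSpace V]
    [NormedAddCommGroup W] [NormedSpace 𝕂 W] [CompleteSpace W] [Nontrivial W]
    [NormedAddCommGroup H] [NormedSpace 𝕂 H] [CompleteSpace H]
    (hrefl : Function.Surjective ⇑(NormedSpace.inclusionInDoubleDual 𝕂 W))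
    (j : V →L[𝕂] H) (hj : Function.Injective ⇑j)
    (a₁ : V →L[𝕂] (W →SL[starRingEnd 𝕂] 𝕂))
    (c : ℝ) (hc : 0 < c)
    (hinfsup : ∀ v : V, c * ‖v‖ ≤ ‖a₁ v‖)
    (hnondeg : ∀ w : W, (∀ v : V, a₁ v w = 0) → w = 0)
    (T : V ≃L[𝕂] (W →SL[starRingEnd 𝕂] 𝕂))
    (hT : ∀ (v : V) (w : W), a₁ v w = T v w)
    (d : H →L[𝕂] (W →SL[starRingEnd 𝕂] 𝕂))
    (Ct : H →L[𝕂] V)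
    (hCt : ∀ (x : H) (w : W), a₁ (Ct x) w = d x w) :
    ((∀ φ : W →SL[starRingEnd 𝕂] 𝕂, ∃! u : V, ∀ w : W, a₁ u w + d (j u) w = φ w) ↔
      Function.Bijective fun u : V => u + Ct (j u)) ∧
    ((Function.Bijective fun u : V => u + Ct (j u)) →
      ∃ Binv : V →L[𝕂] V,
        (∀ v : V, Binv (v + Ct (j v)) = v) ∧
        (∀ v : V, Binv v + Ct (j (Binv v)) = v) ∧
        (∀ φ : W →SL[starRingEnd 𝕂] 𝕂,
          ∀ w : W, a₁ (Binv (T.symm φ)) w + d (j (Binv (T.symm φ))) w = φ w) ∧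
        Continuous fun φ : W →SL[starRingEnd 𝕂] 𝕂 => Binv (T.symm φ)) := by
  -- The bounded operator B = I + Ct ∘ j
  set B : V →L[𝕂] V := ContinuousLinearMap.id 𝕂 V + Ct.comp j with hB
  have hBapp : ∀ u : V, B u = u + Ct (j u) := fun u => rfl
  -- key reformulation: u solves the problem for φ iff B u = T.symm φ
  have key : ∀ (u : V) (φ : W →SL[starRingEnd 𝕂] 𝕂),
      (∀ w : W, a₁ u w + d (j u) w = φ w) ↔ B u = T.symm φ := by
    intro u φ
    constructor
    · intro h
      have hTBu : T (B u) = φ := by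
        ext w
        simp only [← hT, hBapp, map_add, ContinuousLinearMap.add_apply, hCt]
        exact h w
      have := congrArg T.symm hTBu
      simpa using this
    · intro h
      intro w
      have hTBu : T (B u) = φ := by
        rw [h]; simp
      calc a₁ u w + d (j u) w = a₁ (B u) w := by
            rw [hBapp, map_add, ContinuousLinearMap.add_apply, hCt]
        _ = T (B u) w := hT _ _
        _ = φ w := by rw [hTBu]
  constructor
  · constructor
    · intro h
      constructor
      · intro u₁ u₂ heq
        simp only at heq
        have h₁ : B u₁ = B u₂ := by rw [hBapp, hBapp]; exact heq
        obtain ⟨u, hu, huniq⟩ := h (T (B u₁))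
        have e₁ : u₁ = u := huniq u₁ ((key u₁ _).mpr (by simp))
        have e₂ : u₂ = u := huniq u₂ ((key u₂ _).mpr (by simp [← h₁]))
        rw [e₁, e₂]
      · intro v
        obtain ⟨u, hu, _⟩ := h (T v)
        refine ⟨u, ?_⟩
        have := (key u _).mp hu
        simpa [hBapp] using this
    · intro hbij φ
      obtain ⟨u, hu⟩ := hbij.surjective (T.symm φ)
      refine ⟨u, (key u φ).mpr (by rw [hBapp]; exact hu), ?_⟩
      intro y hy
      have h2 := (key y φ).mp hy
      exact hbij.injective (h2.trans hu.symm)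
  · intro hbij
    have hbijB : Function.Bijective B := by
      convert hbij using 1
      exact funext hBapp
    let E : V ≃L[𝕂] V := ContinuousLinearEquiv.ofBijective B
      (LinearMap.ker_eq_bot_of_injective hbijB.injective)
      (LinearMap.range_eq_top.mpr hbijB.surjective)
    refine ⟨E.symm.toContinuousLinearMap, ?_, ?_, ?_, ?_⟩
    · intro v
      have : E v = v + Ct (j v) := rfl
      rw [← this]
      exact E.symm_apply_apply v
    · intro v
      have : E (E.symm v) = v := E.apply_symm_apply v
      exact this
    · intro φ w
      have hBE : B (E.symm (T.symm φ)) = T.symm φ := E.apply_symm_apply _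
      exact (key (E.symm (T.symm φ)) φ).mpr hBE w
    · exact E.symm.continuous.comp (T.symm.continuous)
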